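/- arXiv:2111.12306 — 4 statements merged into one kernel-verified Lean document; each statement's English description precedes it below -/
import Mathlib

section
/- Let Y ∈ [-1,1]^{K×K} be skew-symmetric, γ ≥ 2K, and suppose p ∈ Δ_K satisfies for every i ∈ [K]: Σ_b Y[i,b]p[b] + (2/γ)(1/p[i]) ≤ 5K/γ (so in particular p[i] > 0 for all i). Then for every skew-symmetric f ∈ [-1,1]^{K×K} and every q ∈ Δ_K, q^⊤ f p ≤ (γ/2)·Σ_{a,b} p[a]p[b](f[a,b] - Y[a,b])^2 + 5K/γ. -/
open Finset

theorem per_round_regret_inequality (K : ℕ) (γ : ℝ) (hγ : γ ≥ 2 * K)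
    (Y : Fin K → Fin K → ℝ)
    (hYskew : ∀ i j, Y i j = - Y j i)
    (hYbdd : ∀ i j, |Y i j| ≤ 1)
    (p : Fin K → ℝ) (hp : p ∈ stdSimplex ℝ (Fin K))
    (hpos : ∀ i, 0 < p i)
    (hfeas : ∀ i, ∑ b, Y i b * p b + (2 / γ) * (1 / p i) ≤ 5 * K / γ)
    (f : Fin K → Fin K → ℝ)
    (hfskew : ∀ i j, f i j = - f j i)
    (hfbdd : ∀ i j, |f i j| ≤ 1)
    (q : Fin K → ℝ) (hq : q ∈ stdSimplex ℝ (Fin K)) :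
    ∑ a, ∑ b, q a * f a b * p b ≤
      (γ / 2) * ∑ a, ∑ b, p a * p b * (f a b - Y a b) ^ 2 + 5 * K / γ := by
  have hK : 0 < K := by
    rcases Nat.eq_zero_or_pos K with h | h
    · exfalso; have := hp.2; subst h; simp at this
    · exact h
  have hK1 : (1:ℝ) ≤ K := by exact_mod_cast hK
  have hγ0 : (0:ℝ) < γ := by linarith
  have hq0 : ∀ i, 0 ≤ q i := fun i => hq.1 i
  have hp0 : ∀ i, 0 ≤ p i := fun i => hp.1 i
  have hq1 : ∀ i, q i ≤ 1 := by
    intro i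
    calc q i ≤ ∑ j, q j := Finset.single_le_sum (fun j _ => hq0 j) (mem_univ i)
    _ = 1 := hq.2
  -- key pointwise bound
  have key : ∀ i, q i * (∑ b, (f i b - Y i b) * p b) ≤
      γ/2 * (p i * ∑ b, p b * (f i b - Y i b)^2) + q i * (1/(2*(γ * p i))) := by
    intro i
    set t := ∑ b, (f i b - Y i b) * p b with ht
    set s := ∑ b, p b * (f i b - Y i b)^2 with hs
    have hts : t^2 ≤ s := by
      have h1 := Finset.sum_mul_sq_le_sq_mul_sq Finset.univ
        (fun b => Real.sqrt (p b)) (fun b => Real.sqrt (p b) * (f i b - Y i b))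
      have e1 : ∑ b, Real.sqrt (p b) * (Real.sqrt (p b) * (f i b - Y i b)) = t := by
        rw [ht]; apply Finset.sum_congr rfl; intro b _
        rw [← mul_assoc, Real.mul_self_sqrt (hp0 b)]; ring
      have e2 : ∑ b, Real.sqrt (p b)^2 = 1 := by
        rw [← hp.2]; apply Finset.sum_congr rfl; intro b _
        exact Real.sq_sqrt (hp0 b)
      have e3 : ∑ b, (Real.sqrt (p b) * (f i b - Y i b))^2 = s := by
        rw [hs]; apply Finset.sum_congr rfl; intro b _
        rw [mul_pow, Real.sq_sqrt (hp0 b)]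
      rw [e1, e2, e3, one_mul] at h1
      exact h1
    have hpi := hpos i
    have hc : 0 < γ * p i := mul_pos hγ0 hpi
    have hdiff : (γ * p i)/2 * t^2 + q i^2/(2*(γ * p i)) - q i * t
        = ((γ * p i)*t - q i)^2 / (2*(γ * p i)) := by
      field_simp; ring
    have hnn : 0 ≤ ((γ * p i)*t - q i)^2 / (2*(γ * p i)) :=
      div_nonneg (sq_nonneg _) (by positivity)
    have h2 : q i * t ≤ (γ * p i)/2 * t^2 + q i^2 / (2*(γ * p i)) := by linarith
    have h3 : (γ * p i)/2 * t^2 ≤ (γ * p i)/2 * s :=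
      mul_le_mul_of_nonneg_left hts (by positivity)
    have h4 : q i^2 / (2*(γ * p i)) ≤ q i * (1/(2*(γ * p i))) := by
      rw [div_le_iff₀ (by positivity)]
      have : q i ^ 2 ≤ q i := by nlinarith [hq0 i, hq1 i]
      calc q i ^ 2 ≤ q i := this
      _ = q i * (1/(2*(γ * p i))) * (2*(γ * p i)) := by field_simp
    calc q i * t ≤ (γ * p i)/2 * t^2 + q i^2 / (2*(γ * p i)) := h2
    _ ≤ (γ * p i)/2 * s + q i * (1/(2*(γ * p i))) := by linarith
    _ = γ/2 * (p i * s) + q i * (1/(2*(γ * p i))) := by ring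
  -- split the LHS
  have split : ∑ a, ∑ b, q a * f a b * p b
      = (∑ a, q a * (∑ b, (f a b - Y a b) * p b)) + ∑ a, q a * (∑ b, Y a b * p b) := by
    rw [← Finset.sum_add_distrib]
    apply Finset.sum_congr rfl
    intro a _
    rw [Finset.mul_sum, Finset.mul_sum, ← Finset.sum_add_distrib]
    apply Finset.sum_congr rfl
    intro b _
    ring
  -- bound on Y-part
  have hYpart : ∑ a, q a * (∑ b, Y a b * p b)
      ≤ 5 * K / γ - ∑ a, q a * ((2/γ) * (1/p a)) := by
    have h : ∀ a ∈ Finset.univ, q a * (∑ b, Y a b * p b)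
        ≤ q a * (5 * K / γ - (2/γ) * (1/p a)) := by
      intro a _
      apply mul_le_mul_of_nonneg_left _ (hq0 a)
      linarith [hfeas a]
    calc ∑ a, q a * (∑ b, Y a b * p b)
        ≤ ∑ a, q a * (5 * K / γ - (2/γ) * (1/p a)) := Finset.sum_le_sum h
      _ = (∑ a, q a) * (5 * K / γ) - ∑ a, q a * ((2/γ) * (1/p a)) := by
          rw [Finset.sum_mul, ← Finset.sum_sub_distrib]
          apply Finset.sum_congr rfl; intros; ring
      _ = 5 * K / γ - ∑ a, q a * ((2/γ) * (1/p a)) := by rw [hq.2, one_mul]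
  -- sum of key
  have hsumkey : ∑ a, q a * (∑ b, (f a b - Y a b) * p b)
      ≤ γ/2 * (∑ a, ∑ b, p a * p b * (f a b - Y a b)^2)
        + ∑ a, q a * (1/(2*(γ * p a))) := by
    calc ∑ a, q a * (∑ b, (f a b - Y a b) * p b)
        ≤ ∑ a, (γ/2 * (p a * ∑ b, p b * (f a b - Y a b)^2) + q a * (1/(2*(γ * p a)))) :=
          Finset.sum_le_sum (fun a _ => key a)
      _ = γ/2 * (∑ a, ∑ b, p a * p b * (f a b - Y a b)^2)
          + ∑ a, q a * (1/(2*(γ * p a))) := by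
          rw [Finset.sum_add_distrib, Finset.mul_sum]
          congr 1
          apply Finset.sum_congr rfl
          intro a _
          simp only [Finset.mul_sum]
          apply Finset.sum_congr rfl
          intro b _
          ring
  -- compare residual terms
  have hres : ∑ a, q a * (1/(2*(γ * p a))) ≤ ∑ a, q a * ((2/γ) * (1/p a)) := by
    apply Finset.sum_le_sum
    intro a _
    apply mul_le_mul_of_nonneg_left _ (hq0 a)
    have hpa := hpos a
    rw [div_le_iff₀ (by positivity : (0:ℝ) < 2*(γ * p a))]
    field_simp
    nlinarith
  rw [split]
  linarith
end

section
/- For reals x with |x| ≤ 1 and y, and parameters c > 0, γ > 0, the function δ ↦ c(x+δ) − (γ/4)·w·δ^2 (with w > 0) is maximized at δ = 2c/(γw), with maximum value c·x + c²/(γw). Consequently, for any p ∈ Δ_K with positive entries, any q ∈ Δ_K, and any skew-symmetric Y ∈ [-1,1]^{K×K}, sup over skew-symmetric δ-matrices of [Σ_{a,b} q[a](Y[a,b]+δ[a,b]) p[b] − (γ/4)Σ_{a≠b} p[a]p[b]δ[a,b]²] ≤ Σ_{a,b} q[a]Y[a,b]p[b] + (2/γ)Σ_a q[a]/p[a]. 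-/
open Finset

theorem quadratic_max_and_sup_bound (K : ℕ) :
    (∀ (x c γ w : ℝ), |x| ≤ 1 → 0 < c → 0 < γ → 0 < w →
      (∀ δ : ℝ, c * (x + δ) - (γ / 4) * w * δ ^ 2 ≤ c * x + c ^ 2 / (γ * w)) ∧
      c * (x + 2 * c / (γ * w)) - (γ / 4) * w * (2 * c / (γ * w)) ^ 2 =
        c * x + c ^ 2 / (γ * w)) ∧
    ∀ (γ : ℝ), 0 < γ →
      ∀ p ∈ stdSimplex ℝ (Fin K), (∀ a, 0 < p a) →
      ∀ q ∈ stdSimplex ℝ (Fin K),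
      ∀ Y : Fin K → Fin K → ℝ, (∀ i j, Y i j = - Y j i) → (∀ i j, |Y i j| ≤ 1) →
      ∀ δ : Fin K → Fin K → ℝ, (∀ i j, δ i j = - δ j i) →
        (∑ a, ∑ b, q a * (Y a b + δ a b) * p b) -
          (γ / 4) * ∑ a, ∑ b, (if a ≠ b then p a * p b * (δ a b) ^ 2 else 0) ≤
        (∑ a, ∑ b, q a * Y a b * p b) + (2 / γ) * ∑ a, q a / p a := by
  constructor
  · intro x c γ w _ hc hγ hw
    have hgw : 0 < γ * w := mul_pos hγ hw
    constructor
    · intro δ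
      have h1 : c * δ - (γ / 4) * w * δ ^ 2 ≤ c ^ 2 / (γ * w) := by
        rw [le_div_iff₀ hgw]
        nlinarith [sq_nonneg (γ * w * δ - 2 * c)]
      nlinarith [h1]
    · field_simp
      ring
  · intro γ hγ p hp hppos q hq Y hYskew hYbd δ hδskew
    have hpsum : ∑ a, p a = 1 := hp.2
    have hqsum : ∑ a, q a = 1 := hq.2
    have hq0 : ∀ a, 0 ≤ q a := fun a => hq.1 a
    have hq1 : ∀ a, q a ≤ 1 := by
      intro a
      calc q a ≤ ∑ b, q b := single_le_sum (fun b _ => hq0 b) (mem_univ a)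
        _ = 1 := hqsum
    have hsplit : (∑ a, ∑ b, q a * (Y a b + δ a b) * p b) =
        (∑ a, ∑ b, q a * Y a b * p b) + ∑ a, ∑ b, q a * δ a b * p b := by
      rw [← Finset.sum_add_distrib]
      congr 1; ext a
      rw [← Finset.sum_add_distrib]
      congr 1; ext b; ring
    rw [hsplit]
    have key : (∑ a, ∑ b, q a * δ a b * p b) -
        (γ / 4) * ∑ a, ∑ b, (if a ≠ b then p a * p b * (δ a b) ^ 2 else 0) ≤
        (2 / γ) * ∑ a, q a / p a := by
      rw [sub_le_iff_le_add']
      have step1 : (∑ a, ∑ b, q a * δ a b * p b) ≤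
          ∑ a, ∑ b, ((γ / 4) * (if a ≠ b then p a * p b * (δ a b) ^ 2 else 0)
            + q a * p b / (γ * p a)) := by
        apply Finset.sum_le_sum
        intro a _
        apply Finset.sum_le_sum
        intro b _
        have hpa := hppos a
        have hpb := hppos b
        have hqa := hq0 a
        by_cases hab : a = b
        · subst hab
          have hδ0 : δ a a = 0 := by have := hδskew a a; linarith
          simp only [hδ0, mul_zero, zero_mul, ne_eq, not_true_eq_false, if_false,
            mul_zero, zero_add]
          positivity
        · simp only [ne_eq, hab, not_false_eq_true, if_true]
          rw [← sub_le_iff_le_add', le_div_iff₀ (by positivity : (0:ℝ) < γ * p a)]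
          nlinarith [mul_nonneg (mul_nonneg (sq_nonneg (q a - γ * p a * δ a b / 2)) hpb.le) hγ.le,
            mul_nonneg (mul_nonneg (mul_nonneg hqa (sub_nonneg.2 (hq1 a))) hpb.le) hγ.le,
            mul_pos hpa hpb]
      calc (∑ a, ∑ b, q a * δ a b * p b)
          ≤ ∑ a, ∑ b, ((γ / 4) * (if a ≠ b then p a * p b * (δ a b) ^ 2 else 0)
            + q a * p b / (γ * p a)) := step1
        _ = (γ / 4) * (∑ a, ∑ b, (if a ≠ b then p a * p b * (δ a b) ^ 2 else 0))
            + (1 / γ) * ∑ a, q a / p a := by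
              rw [Finset.mul_sum, Finset.mul_sum, ← Finset.sum_add_distrib]
              congr 1; ext a
              rw [Finset.sum_add_distrib, Finset.mul_sum]
              congr 1
              rw [← Finset.sum_div, ← Finset.mul_sum, hpsum, mul_one]
              have hpa := (hppos a).ne'
              field_simp
        _ ≤ (γ / 4) * (∑ a, ∑ b, (if a ≠ b then p a * p b * (δ a b) ^ 2 else 0))
            + (2 / γ) * ∑ a, q a / p a := by
              apply add_le_add_right
              apply mul_le_mul_of_nonneg_right
              · rw [div_le_div_iff₀ hγ hγ]; nlinarith
              · exact Finset.sum_nonneg fun a _ => div_nonneg (hq0 a) (hppos a).le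
    linarith
end

section
/- (Minimax step of Lemma 1) For any fixed skew-symmetric Y ∈ [-1,1]^{K×K}, γ > 0, and ε ∈ (0,1/2]: min_{p∈Δ_K} max_{q∈Δ_K} [ q^⊤ Y p^(ε) + (2/γ)Σ_a q[a]/p^(ε)[a] ] ≤ ε + 4K/γ, where p^(ε) := (1−ε)p + ε𝟙/K. In particular, choosing ε = K/γ with γ ≥ 2K gives the bound 5K/γ. -/
open Finset Pointwise

private theorem inv_convex' (A B s t : ℝ) (hA : 0 < A) (hB : 0 < B) (hs : 0 ≤ s) (ht : 0 ≤ t)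
    (hst : s + t = 1) : 1 / (s*A + t*B) ≤ s * (1/A) + t * (1/B) := by
  have hD : 0 < s*A + t*B := by
    rcases le_total A B with h | h
    · nlinarith [mul_le_mul_of_nonneg_left h ht]
    · nlinarith [mul_le_mul_of_nonneg_left h hs]
  rw [mul_one_div, mul_one_div, div_add_div _ _ (ne_of_gt hA) (ne_of_gt hB),
    div_le_div_iff₀ hD (by positivity), one_mul]
  have hseq : s = 1 - t := by linarith
  subst hseq
  nlinarith [mul_nonneg (mul_nonneg ht hs) (sq_nonneg (A-B))]

theorem minimax_step (K : ℕ) (hK : 0 < K)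
    (Y : Fin K → Fin K → ℝ)
    (hYskew : ∀ i j, Y i j = - Y j i)
    (hYbdd : ∀ i j, |Y i j| ≤ 1)
    (γ ε : ℝ) (hγ : 0 < γ) (hε : 0 < ε) (hε2 : ε ≤ 1/2) :
    ∃ p ∈ stdSimplex ℝ (Fin K),
      ∀ q ∈ stdSimplex ℝ (Fin K),
        (∑ a, ∑ b, q a * Y a b * ((1 - ε) * p b + ε / K)) +
          (2 / γ) * ∑ a, q a / ((1 - ε) * p a + ε / K) ≤ ε + 4 * K / γ := by
  classical
  have hKR : (0:ℝ) < K := by exact_mod_cast hK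
  set c : ℝ := ε + 4 * K / γ with hc
  set pe : (Fin K → ℝ) → Fin K → ℝ := fun p a => (1 - ε) * p a + ε / K with hpedef
  set g : (Fin K → ℝ) → Fin K → ℝ :=
    fun p a => (∑ b, Y a b * pe p b) + (2/γ) / pe p a with hgdef
  have hεK : (0:ℝ) < ε / K := div_pos hε hKR
  have h1ε : (0:ℝ) < 1 - ε := by linarith
  have hpos : ∀ p ∈ stdSimplex ℝ (Fin K), ∀ a, 0 < pe p a := by
    intro p hp a
    have h0 : 0 ≤ (1 - ε) * p a := mul_nonneg h1ε.le (hp.1 a)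
    simp only [hpedef]
    linarith
  -- rewrite the objective
  have hexpr : ∀ p q : Fin K → ℝ,
      (∑ a, ∑ b, q a * Y a b * ((1 - ε) * p b + ε / K)) +
        (2 / γ) * ∑ a, q a / ((1 - ε) * p a + ε / K) = ∑ a, q a * g p a := by
    intro p q
    have e1 : ∀ a, q a * g p a =
        (∑ b, q a * Y a b * ((1 - ε) * p b + ε / K)) + q a * ((2/γ) / pe p a) := by
      intro a
      simp only [hgdef]
      rw [mul_add, Finset.mul_sum]
      congr 1
      refine Finset.sum_congr rfl fun b _ => ?_
      simp only [hpedef]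
      ring
    rw [Finset.sum_congr rfl fun a _ => e1 a, Finset.sum_add_distrib]
    congr 1
    rw [Finset.mul_sum]
    refine Finset.sum_congr rfl fun a _ => ?_
    simp only [hpedef]
    ring
  -- diagonal bound
  have hdiag : ∀ q ∈ stdSimplex ℝ (Fin K), ∑ a, q a * g q a ≤ c := by
    intro q hq
    obtain ⟨hq1, hq2⟩ := hq
    have hsplit : ∑ a, q a * g q a =
        ((1-ε) * ∑ a, ∑ b, q a * Y a b * q b + (ε/K) * ∑ a, ∑ b, q a * Y a b)
          + ∑ a, q a * ((2/γ) / pe q a) := by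
      have e1 : ∀ a, q a * g q a =
          (∑ b, ((1-ε) * (q a * Y a b * q b) + (ε/K) * (q a * Y a b)))
            + q a * ((2/γ) / pe q a) := by
        intro a
        simp only [hgdef]
        rw [mul_add, Finset.mul_sum]
        congr 1
        refine Finset.sum_congr rfl fun b _ => ?_
        simp only [hpedef]
        ring
      rw [Finset.sum_congr rfl fun a _ => e1 a, Finset.sum_add_distrib]
      congr 1
      rw [Finset.mul_sum, Finset.mul_sum, ← Finset.sum_add_distrib]
      refine Finset.sum_congr rfl fun a _ => ?_
      rw [Finset.mul_sum, Finset.mul_sum, ← Finset.sum_add_distrib]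
    have hskew0 : ∑ a, ∑ b, q a * Y a b * q b = 0 := by
      have h1 : ∑ a, ∑ b, q a * Y a b * q b = - ∑ a, ∑ b, q a * Y a b * q b := by
        conv_lhs =>
          rw [show (∑ a, ∑ b, q a * Y a b * q b) = ∑ a, ∑ b, q a * (- Y b a) * q b from
            Finset.sum_congr rfl fun a _ => Finset.sum_congr rfl fun b _ => by
              rw [hYskew a b]]
        rw [Finset.sum_comm]
        rw [show (∑ b, ∑ a, q a * (- Y b a) * q b) = ∑ b, ∑ a, -(q b * Y b a * q a) from
          Finset.sum_congr rfl fun b _ => Finset.sum_congr rfl fun a _ => by ring]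
        simp
      linarith
    have hlin : (ε/K) * ∑ a, ∑ b, q a * Y a b ≤ ε := by
      have hb : ∑ a, ∑ b, q a * Y a b ≤ (K:ℝ) := by
        calc ∑ a, ∑ b, q a * Y a b ≤ ∑ a, ∑ _b : Fin K, q a := by
              refine Finset.sum_le_sum fun a _ => Finset.sum_le_sum fun b _ => ?_
              have h2 := (abs_le.mp (hYbdd a b)).2
              nlinarith [hq1 a]
          _ = (K:ℝ) := by
              simp only [Finset.sum_const, Finset.card_univ, Fintype.card_fin, nsmul_eq_mul]
              rw [← Finset.mul_sum, hq2, mul_one]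
      calc (ε/K) * ∑ a, ∑ b, q a * Y a b ≤ (ε/K) * K :=
            mul_le_mul_of_nonneg_left hb hεK.le
        _ = ε := by field_simp
    have hbar : ∑ a, q a * ((2/γ) / pe q a) ≤ 4 * K / γ := by
      have hterm : ∀ a : Fin K, q a * ((2/γ) / pe q a) ≤ 4 / γ := by
        intro a
        have hpa : 0 < pe q a := hpos q ⟨hq1, hq2⟩ a
        have hle : q a ≤ 2 * pe q a := by
          simp only [hpedef]
          nlinarith [hq1 a]
        have h2γ : 0 ≤ (2/γ) / pe q a := by positivity
        calc q a * ((2/γ) / pe q a) ≤ (2 * pe q a) * ((2/γ) / pe q a) :=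
              mul_le_mul_of_nonneg_right hle h2γ
          _ = 4 / γ := by field_simp; ring
      calc ∑ a, q a * ((2/γ) / pe q a) ≤ ∑ _a : Fin K, 4 / γ :=
            Finset.sum_le_sum fun a _ => hterm a
        _ = 4 * K / γ := by
            simp only [Finset.sum_const, Finset.card_univ, Fintype.card_fin, nsmul_eq_mul]
            ring
    rw [hsplit, hskew0]
    simp only [mul_zero, zero_add]
    linarith
  -- it suffices to find p with coordinatewise bound
  suffices h : ∃ p ∈ stdSimplex ℝ (Fin K), ∀ a, g p a ≤ c by
    obtain ⟨p, hp, hpa⟩ := h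
    refine ⟨p, hp, fun q hq => ?_⟩
    rw [hexpr]
    calc ∑ a, q a * g p a ≤ ∑ a, q a * c :=
          Finset.sum_le_sum fun a _ => mul_le_mul_of_nonneg_left (hpa a) (hq.1 a)
      _ = c := by rw [← Finset.sum_mul, hq.2, one_mul]
  by_contra hno
  push_neg at hno
  -- the convex closed set C of dominated value vectors
  set C : Set (Fin K → ℝ) :=
    {x | ∃ p ∈ stdSimplex ℝ (Fin K), ∀ a, g p a ≤ x a} with hCdef
  have hgcont : ContinuousOn (fun p => g p) (stdSimplex ℝ (Fin K)) := by
    refine continuousOn_pi.mpr fun a => ?_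
    simp only [hgdef, hpedef]
    refine ContinuousOn.add (Continuous.continuousOn ?_)
      (ContinuousOn.div continuousOn_const (Continuous.continuousOn ?_) fun p hp => ?_)
    · exact continuous_finset_sum _ fun b _ =>
        continuous_const.mul ((continuous_const.mul (continuous_apply b)).add continuous_const)
    · exact (continuous_const.mul (continuous_apply a)).add continuous_const
    · exact ne_of_gt (hpos p hp a)
  have hCclosed : IsClosed C := by
    have horth : IsClosed {y : Fin K → ℝ | ∀ a, 0 ≤ y a} := by
      have heq : {y : Fin K → ℝ | ∀ a, 0 ≤ y a} = ⋂ a, {y | 0 ≤ y a} := by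
        ext y; simp [Set.mem_iInter]
      rw [heq]
      exact isClosed_iInter fun a => isClosed_le continuous_const (continuous_apply a)
    have hCalt : C = (fun p => g p) '' stdSimplex ℝ (Fin K) + {y : Fin K → ℝ | ∀ a, 0 ≤ y a} := by
      ext x
      constructor
      · rintro ⟨p, hp, hpa⟩
        rw [Set.mem_add]
        exact ⟨g p, ⟨p, hp, rfl⟩, x - g p, fun a => sub_nonneg.mpr (hpa a), by abel⟩
      · intro hx
        rw [Set.mem_add] at hx
        obtain ⟨u', ⟨p, hp, rfl⟩, v, hv, rfl⟩ := hx
        exact ⟨p, hp, fun a => le_add_of_nonneg_right (hv a)⟩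
    rw [hCalt]
    exact horth.add_left_of_isCompact ((isCompact_stdSimplex ℝ (Fin K)).image_of_continuousOn hgcont)
  have hCconv : Convex ℝ C := by
    rintro x ⟨p1, hp1, h1⟩ y ⟨p2, hp2, h2⟩ s t hs ht hst
    refine ⟨s • p1 + t • p2, (convex_stdSimplex ℝ _) hp1 hp2 hs ht hst, fun a => ?_⟩
    have hpe : ∀ b, pe (s • p1 + t • p2) b = s * pe p1 b + t * pe p2 b := by
      intro b
      have hseq : s = 1 - t := by linarith
      subst hseq
      simp only [hpedef, Pi.add_apply, Pi.smul_apply, smul_eq_mul]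
      ring
    have hga : g (s • p1 + t • p2) a ≤ s * g p1 a + t * g p2 a := by
      simp only [hgdef]
      have hsum : ∑ b, Y a b * pe (s • p1 + t • p2) b =
          s * ∑ b, Y a b * pe p1 b + t * ∑ b, Y a b * pe p2 b := by
        rw [Finset.mul_sum, Finset.mul_sum, ← Finset.sum_add_distrib]
        exact Finset.sum_congr rfl fun b _ => by rw [hpe b]; ring
      rw [hsum, hpe a]
      have hA := hpos p1 hp1 a
      have hB := hpos p2 hp2 a
      have hic := inv_convex' (pe p1 a) (pe p2 a) s t hA hB hs ht hst
      have h2' : (2/γ) / (s * pe p1 a + t * pe p2 a) ≤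
          s * ((2/γ)/pe p1 a) + t * ((2/γ)/pe p2 a) := by
        have h2γ : (0:ℝ) ≤ 2/γ := by positivity
        calc (2/γ)/(s * pe p1 a + t * pe p2 a)
            = (2/γ) * (1/(s * pe p1 a + t * pe p2 a)) := by ring
          _ ≤ (2/γ) * (s * (1/pe p1 a) + t * (1/pe p2 a)) :=
              mul_le_mul_of_nonneg_left hic h2γ
          _ = s * ((2/γ)/pe p1 a) + t * ((2/γ)/pe p2 a) := by ring
      linarith
    calc g (s • p1 + t • p2) a ≤ s * g p1 a + t * g p2 a := hga
      _ ≤ s * x a + t * y a :=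
          add_le_add (mul_le_mul_of_nonneg_left (h1 a) hs)
            (mul_le_mul_of_nonneg_left (h2 a) ht)
      _ = (s • x + t • y) a := by simp [Pi.add_apply]
  have hcnot : (fun _ : Fin K => c) ∉ C := by
    rintro ⟨p, hp, hpa⟩
    obtain ⟨a, ha⟩ := hno p hp
    exact absurd (hpa a) (not_le.mpr ha)
  obtain ⟨f, u, hfu, hfc⟩ := geometric_hahn_banach_closed_point hCconv hCclosed hcnot
  -- representation of f
  have hrep : ∀ x : Fin K → ℝ, f x = ∑ a, x a * f (Pi.single a 1) := by
    intro x
    conv_lhs => rw [← Finset.univ_sum_single x]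
    rw [map_sum]
    refine Finset.sum_congr rfl fun a _ => ?_
    have hsm : Pi.single a (x a) = x a • (Pi.single a 1 : Fin K → ℝ) := by
      funext b
      rcases eq_or_ne b a with h | h <;> simp [Pi.single_apply, h]
    rw [hsm, map_smul, smul_eq_mul]
  -- the uniform distribution
  set p0 : Fin K → ℝ := fun _ => (K:ℝ)⁻¹ with hp0def
  have hp0 : p0 ∈ stdSimplex ℝ (Fin K) := by
    constructor
    · intro a; positivity
    · simp only [hp0def, Finset.sum_const, Finset.card_univ, Fintype.card_fin, nsmul_eq_mul]
      exact mul_inv_cancel₀ (ne_of_gt hKR)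
  have hgp0C : g p0 ∈ C := ⟨p0, hp0, fun a => le_refl _⟩
  -- coordinates of f are nonpositive
  have hfneg : ∀ a, f (Pi.single a (1:ℝ)) ≤ 0 := by
    intro a
    by_contra hposv
    push_neg at hposv
    set v := f (Pi.single a (1:ℝ)) with hv
    set t := max 0 ((u - f (g p0)) / v) with htdef
    have htnn : 0 ≤ t := le_max_left _ _
    have hmem : g p0 + t • (Pi.single a 1 : Fin K → ℝ) ∈ C := by
      refine ⟨p0, hp0, fun b => ?_⟩
      have hsng : (0:ℝ) ≤ (Pi.single a 1 : Fin K → ℝ) b := by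
        rcases eq_or_ne b a with h | h <;> simp [Pi.single_apply, h]
      simp only [Pi.add_apply, Pi.smul_apply, smul_eq_mul]
      nlinarith [mul_nonneg htnn hsng]
    have hlt := hfu _ hmem
    rw [map_add, map_smul, smul_eq_mul, ← hv] at hlt
    have hge : (u - f (g p0)) / v ≤ t := le_max_right _ _
    rw [div_le_iff₀ hposv] at hge
    linarith
  set w : Fin K → ℝ := fun a => -(f (Pi.single a 1)) with hwdef
  have hw : ∀ a, 0 ≤ w a := fun a => neg_nonneg.mpr (hfneg a)
  have hfrep : ∀ x : Fin K → ℝ, f x = - ∑ a, x a * w a := by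
    intro x
    rw [hrep x]
    have e : ∀ a : Fin K, x a * f (Pi.single a 1) = -(x a * w a) := by
      intro a; simp [hwdef]
    rw [Finset.sum_congr rfl fun a _ => e a, Finset.sum_neg_distrib]
  set W : ℝ := ∑ a, w a with hWdef
  have hWnn : 0 ≤ W := Finset.sum_nonneg fun a _ => hw a
  have hfcval : f (fun _ : Fin K => c) = - (c * W) := by
    rw [hfrep, hWdef, Finset.mul_sum]
  have hWpos : 0 < W := by
    rcases hWnn.lt_or_eq with h | h
    · exact h
    · exfalso
      have hallz : ∀ a, w a = 0 := by
        intro a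
        exact (Finset.sum_eq_zero_iff_of_nonneg fun a _ => hw a).mp h.symm a (Finset.mem_univ a)
      have hf0 : ∀ x : Fin K → ℝ, f x = 0 := by
        intro x
        rw [hfrep]
        have : ∑ a, x a * w a = 0 :=
          Finset.sum_eq_zero fun a _ => by rw [hallz a, mul_zero]
        rw [this, neg_zero]
      have h1 := hfu _ hgp0C
      rw [hf0] at h1
      rw [hf0] at hfc
      linarith
  set q : Fin K → ℝ := fun a => w a / W with hqdef
  have hqΔ : q ∈ stdSimplex ℝ (Fin K) := by
    constructor
    · intro a; exact div_nonneg (hw a) hWnn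
    · simp only [hqdef]
      rw [← Finset.sum_div, ← hWdef, div_self (ne_of_gt hWpos)]
  have hgqC : g q ∈ C := ⟨q, hqΔ, fun a => le_refl _⟩
  have hlt := (hfu _ hgqC).trans hfc
  rw [hfrep (g q), hfcval, neg_lt_neg_iff] at hlt
  have hdq := hdiag q hqΔ
  have hsum : ∑ a, g q a * w a = W * ∑ a, q a * g q a := by
    rw [Finset.mul_sum]
    refine Finset.sum_congr rfl fun a _ => ?_
    simp only [hqdef]
    field_simp
  rw [hsum] at hlt
  have hfin : W * ∑ a, q a * g q a ≤ W * c := mul_le_mul_of_nonneg_left hdq hWnn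
  nlinarith
end

section
/- Let U ∈ ℝ^{K×K} and let p ∈ Δ_{K×K} be a coarse correlated equilibrium of U, meaning Σ_{a,b} p[a,b]U[a,b] ≥ max_{a*} Σ_b p^r[b] U[a*,b] and Σ_{a,b} p[a,b]U[b,a] ≥ max_{b*} Σ_a p^ℓ[a] U[b*,a], where p^ℓ[a]=Σ_b p[a,b] and p^r[b]=Σ_a p[a,b]. Suppose P ∈ ℝ^{K×K} satisfies P[a,b] ≤ U[a,b] entrywise and U[a,b] + U[b,a] = 2C[a,b] for some matrix C. Then for every q ∈ Δ_K: q^⊤ P (p^ℓ + p^r) ≤ 2·Σ_{a,b} p[a,b] C[a,b]. -/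
open Finset

theorem cce_regret_bound (K : ℕ)
    (U P C : Fin K → Fin K → ℝ)
    (p : Fin K → Fin K → ℝ)
    (hp : (fun ab : Fin K × Fin K => p ab.1 ab.2) ∈ stdSimplex ℝ (Fin K × Fin K))
    (hCCE1 : ∀ astar, ∑ a, ∑ b, p a b * U a b ≥ ∑ b, (∑ a, p a b) * U astar b)
    (hCCE2 : ∀ bstar, ∑ a, ∑ b, p a b * U b a ≥ ∑ a, (∑ b, p a b) * U bstar a)
    (hPU : ∀ a b, P a b ≤ U a b)
    (hUC : ∀ a b, U a b + U b a = 2 * C a b)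
    (q : Fin K → ℝ) (hq : q ∈ stdSimplex ℝ (Fin K)) :
    ∑ a, ∑ b, q a * P a b * ((∑ c, p b c) + (∑ c, p c b)) ≤
      2 * ∑ a, ∑ b, p a b * C a b := by
  have hpnn : ∀ a b, 0 ≤ p a b := fun a b => hp.1 (a, b)
  have hqnn : ∀ a, 0 ≤ q a := hq.1
  have hqs : ∑ a, q a = 1 := hq.2
  set V := ∑ a, ∑ b, p a b * U a b with hV
  set W := ∑ a, ∑ b, p a b * U b a with hW
  have key : ∀ a : Fin K, ∑ b, P a b * ((∑ c, p b c) + (∑ c, p c b)) ≤ W + V := by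
    intro a
    have h1 : ∑ b, P a b * ((∑ c, p b c) + (∑ c, p c b))
        ≤ ∑ b, U a b * ((∑ c, p b c) + (∑ c, p c b)) := by
      apply Finset.sum_le_sum
      intro b _
      have hnn : (0:ℝ) ≤ (∑ c, p b c) + (∑ c, p c b) := by
        have h1 : (0:ℝ) ≤ ∑ c, p b c := Finset.sum_nonneg fun c _ => hpnn b c
        have h2 : (0:ℝ) ≤ ∑ c, p c b := Finset.sum_nonneg fun c _ => hpnn c b
        linarith
      exact mul_le_mul_of_nonneg_right (hPU a b) hnn
    have h2 : ∑ b, U a b * ((∑ c, p b c) + (∑ c, p c b))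
        = (∑ b, (∑ c, p b c) * U a b) + (∑ b, (∑ c, p c b) * U a b) := by
      rw [← Finset.sum_add_distrib]
      exact Finset.sum_congr rfl fun b _ => by ring
    have h3 : ∑ b, (∑ c, p b c) * U a b ≤ W := hCCE2 a
    have h4 : ∑ b, (∑ c, p c b) * U a b ≤ V := hCCE1 a
    linarith
  have step1 : ∑ a, ∑ b, q a * P a b * ((∑ c, p b c) + (∑ c, p c b))
      = ∑ a, q a * ∑ b, P a b * ((∑ c, p b c) + (∑ c, p c b)) := by
    refine Finset.sum_congr rfl fun a _ => ?_
    rw [Finset.mul_sum]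
    exact Finset.sum_congr rfl fun b _ => by ring
  have step2 : ∑ a, q a * ∑ b, P a b * ((∑ c, p b c) + (∑ c, p c b)) ≤ W + V := by
    calc ∑ a, q a * ∑ b, P a b * ((∑ c, p b c) + (∑ c, p c b))
        ≤ ∑ a, q a * (W + V) := Finset.sum_le_sum fun a _ =>
          mul_le_mul_of_nonneg_left (key a) (hqnn a)
      _ = (∑ a, q a) * (W + V) := by rw [← Finset.sum_mul]
      _ = W + V := by rw [hqs, one_mul]
  have final : W + V = 2 * ∑ a, ∑ b, p a b * C a b := by
    rw [hV, hW, Finset.mul_sum, ← Finset.sum_add_distrib]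
    refine Finset.sum_congr rfl fun a _ => ?_
    rw [Finset.mul_sum, ← Finset.sum_add_distrib]
    refine Finset.sum_congr rfl fun b _ => ?_
    linear_combination p a b * hUC a b
  linarith [step2, step1.le, step1.ge]
end
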